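/- Let d ≥ 2 and ν ≥ 1.66. Then |σ_0| ≤ d/3, |σ_1| ≤ 1, |σ_2| ≤ (3d/2)·exp(1/(2ν²)), and |σ_3| ≤ (3/2)·exp(1/(2ν²)). -/

import Mathlib

noncomputable section

/-- The LIME weight function ψ_ν(t) = exp(−(1−√(1−t))²/(2ν²)). -/
def psi (ν t : ℝ) : ℝ := Real.exp (-(1 - Real.sqrt (1 - t)) ^ 2 / (2 * ν ^ 2))

/-- The coefficient α_p(d,ν). -/
def alpha (d : ℕ) (ν : ℝ) (p : ℕ) : ℝ :=
  (1 / (d : ℝ)) * ∑ s ∈ Finset.Icc 1 d,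
    (∏ k ∈ Finset.range p, (((d : ℝ) - (s : ℝ) - (k : ℝ)) / ((d : ℝ) - (k : ℝ)))) *
      psi ν ((s : ℝ) / (d : ℝ))

/-- The normalization constant c_d = (d−1)α₀α₂ − dα₁² + α₀α₁. -/
def cConst (d : ℕ) (ν : ℝ) : ℝ :=
  ((d : ℝ) - 1) * alpha d ν 0 * alpha d ν 2 - (d : ℝ) * (alpha d ν 1) ^ 2
    + alpha d ν 0 * alpha d ν 1

/-- σ₀ = (d−1)α₂ + α₁. -/
def sigma0 (d : ℕ) (ν : ℝ) : ℝ := ((d : ℝ) - 1) * alpha d ν 2 + alpha d ν 1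

/-- σ₁ = −α₁. -/
def sigma1 (d : ℕ) (ν : ℝ) : ℝ := -(alpha d ν 1)

/-- σ₂ = ((d−2)α₀α₂ − (d−1)α₁² + α₀α₁)/(α₁−α₂). -/
def sigma2 (d : ℕ) (ν : ℝ) : ℝ :=
  (((d : ℝ) - 2) * alpha d ν 0 * alpha d ν 2 - ((d : ℝ) - 1) * (alpha d ν 1) ^ 2
      + alpha d ν 0 * alpha d ν 1) / (alpha d ν 1 - alpha d ν 2)

/-- σ₃ = (α₁² − α₀α₂)/(α₁−α₂). -/
def sigma3 (d : ℕ) (ν : ℝ) : ℝ :=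
  ((alpha d ν 1) ^ 2 - alpha d ν 0 * alpha d ν 2) / (alpha d ν 1 - alpha d ν 2)

/-- The matrix Σ ∈ ℝ^{(d+1)×(d+1)}: Σ₀₀ = α₀; Σ₀ⱼ = Σⱼ₀ = Σⱼⱼ = α₁ for 1 ≤ j ≤ d;
Σⱼₖ = α₂ for 1 ≤ j ≠ k ≤ d. -/
def SigmaMat (d : ℕ) (ν : ℝ) : Matrix (Fin (d + 1)) (Fin (d + 1)) ℝ :=
  Matrix.of fun i j =>
    if i = 0 ∧ j = 0 then alpha d ν 0
    else if i = 0 ∨ j = 0 ∨ i = j then alpha d ν 1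
    else alpha d ν 2

lemma sum_Icc_id' (d : ℕ) : ∑ s ∈ Finset.Icc 1 d, (s:ℝ) = d*(d+1)/2 := by
  induction d with
  | zero => simp
  | succ n ih =>
    rw [Finset.sum_Icc_succ_top (by omega : 1 ≤ n+1), ih]
    push_cast; ring

lemma sum_Icc_sq' (d : ℕ) : ∑ s ∈ Finset.Icc 1 d, (s:ℝ)^2 = d*(d+1)*(2*d+1)/6 := by
  induction d with
  | zero => simp
  | succ n ih =>
    rw [Finset.sum_Icc_succ_top (by omega : 1 ≤ n+1), ih]
    push_cast; ring

lemma sum_Icc_poly (d : ℕ) (a b c : ℝ) :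
    ∑ s ∈ Finset.Icc 1 d, (a + b*(s:ℝ) + c*(s:ℝ)^2)
      = a*d + b*(d*(d+1)/2) + c*(d*(d+1)*(2*d+1)/6) := by
  rw [Finset.sum_add_distrib, Finset.sum_add_distrib, ← Finset.mul_sum, ← Finset.mul_sum,
    Finset.sum_const, Nat.card_Icc, sum_Icc_id', sum_Icc_sq']
  simp [Nat.add_sub_cancel, nsmul_eq_mul]
  ring

lemma psi_le_one (ν t : ℝ) (hν : 0 < ν) : psi ν t ≤ 1 := by
  rw [psi, Real.exp_le_one_iff, neg_div]
  have h1 : 0 ≤ (1 - Real.sqrt (1 - t))^2 := sq_nonneg _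
  have h2 : (0:ℝ) < 2*ν^2 := by positivity
  exact neg_nonpos.mpr (div_nonneg h1 h2.le)

lemma exp_le_psi (ν t : ℝ) (hν : 0 < ν) (ht : 0 ≤ t) :
    Real.exp (-(1/(2*ν^2))) ≤ psi ν t := by
  rw [psi]
  apply Real.exp_le_exp.mpr
  rw [neg_div]
  have hs0 : 0 ≤ Real.sqrt (1 - t) := Real.sqrt_nonneg _
  have hs1 : Real.sqrt (1 - t) ≤ 1 := Real.sqrt_le_one.mpr (by linarith)
  have h1 : (1 - Real.sqrt (1 - t))^2 ≤ 1 := by nlinarith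
  have h2 : (0:ℝ) < 2*ν^2 := by positivity
  exact neg_le_neg (div_le_div_of_nonneg_right h1 h2.le)

set_option maxHeartbeats 2000000 in
/-- for d ≥ 2 and ν ≥ 1.66, bounds on the σ coefficients. -/
theorem sigma_coefficients_bounds (d : ℕ) (hd : 2 ≤ d) (ν : ℝ) (hν : (1.66 : ℝ) ≤ ν) :
    |sigma0 d ν| ≤ (d : ℝ) / 3
      ∧ |sigma1 d ν| ≤ 1
      ∧ |sigma2 d ν| ≤ (3 * (d : ℝ) / 2) * Real.exp (1 / (2 * ν ^ 2))
      ∧ |sigma3 d ν| ≤ (3 / 2) * Real.exp (1 / (2 * ν ^ 2)) := by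
  have hν0 : (0:ℝ) < ν := lt_of_lt_of_le (by norm_num) hν
  have hD2 : (2:ℝ) ≤ (d:ℝ) := by exact_mod_cast hd
  set D : ℝ := (d : ℝ) with hDdef
  have hD0 : (0:ℝ) < D := by linarith
  have hDne : D ≠ 0 := ne_of_gt hD0
  have hD1 : (0:ℝ) < D - 1 := by linarith
  have hD1ne : D - 1 ≠ 0 := ne_of_gt hD1
  set m : ℝ := Real.exp (-(1/(2*ν^2))) with hm
  set E : ℝ := Real.exp (1/(2*ν^2)) with hE
  have hmE : m * E = 1 := by
    rw [hm, hE, ← Real.exp_add, neg_add_cancel, Real.exp_zero]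
  have hm0 : (0:ℝ) < m := Real.exp_pos _
  have hE1 : (1:ℝ) ≤ E := Real.one_le_exp (by positivity)
  -- alpha expansions
  have e0 : alpha d ν 0 = (1/D) * ∑ s ∈ Finset.Icc 1 d, psi ν ((s:ℝ)/D) := by
    rw [hDdef]; simp [alpha]
  have e1 : alpha d ν 1 = (1/D) * ∑ s ∈ Finset.Icc 1 d,
      ((D - (s:ℝ))/D) * psi ν ((s:ℝ)/D) := by
    rw [hDdef]; simp [alpha]
  have e2 : alpha d ν 2 = (1/D) * ∑ s ∈ Finset.Icc 1 d,
      ((D - (s:ℝ)) * (D - (s:ℝ) - 1) / (D * (D - 1))) * psi ν ((s:ℝ)/D) := by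
    rw [hDdef]; simp [alpha, Finset.prod_range_succ]
  -- generic sum bound helpers
  have step : ∀ (F : ℕ → ℝ) (a b c r : ℝ),
      (∀ s ∈ Finset.Icc 1 d, F s ≤ a + b*(s:ℝ) + c*(s:ℝ)^2) →
      (1/D) * (a*D + b*(D*(D+1)/2) + c*(D*(D+1)*(2*D+1)/6)) ≤ r →
      (1/D) * ∑ s ∈ Finset.Icc 1 d, F s ≤ r := by
    intro F a b c r h hr
    refine le_trans (mul_le_mul_of_nonneg_left ?_ (by positivity : (0:ℝ) ≤ 1/D)) hr
    exact (Finset.sum_le_sum h).trans_eq (by rw [sum_Icc_poly, ← hDdef])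
  have step' : ∀ (F : ℕ → ℝ) (a b c r : ℝ),
      (∀ s ∈ Finset.Icc 1 d, a + b*(s:ℝ) + c*(s:ℝ)^2 ≤ F s) →
      r ≤ (1/D) * (a*D + b*(D*(D+1)/2) + c*(D*(D+1)*(2*D+1)/6)) →
      r ≤ (1/D) * ∑ s ∈ Finset.Icc 1 d, F s := by
    intro F a b c r h hr
    refine le_trans hr (mul_le_mul_of_nonneg_left ?_ (by positivity : (0:ℝ) ≤ 1/D))
    exact le_of_eq_of_le (by rw [sum_Icc_poly, ← hDdef]) (Finset.sum_le_sum h)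
  -- pointwise facts
  have memfacts : ∀ s ∈ Finset.Icc 1 d, (1:ℝ) ≤ (s:ℝ) ∧ (s:ℝ) ≤ D := by
    intro s hs
    rw [Finset.mem_Icc] at hs
    exact ⟨by exact_mod_cast hs.1, by rw [hDdef]; exact_mod_cast hs.2⟩
  have hψ1 : ∀ s : ℕ, psi ν ((s:ℝ)/D) ≤ 1 := fun s => psi_le_one ν _ hν0
  have hψm : ∀ s : ℕ, m ≤ psi ν ((s:ℝ)/D) := fun s => exp_le_psi ν _ hν0 (by positivity)
  have hψ0 : ∀ s : ℕ, 0 < psi ν ((s:ℝ)/D) := fun s => Real.exp_pos _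
  have hw2nn : ∀ s ∈ Finset.Icc 1 d, 0 ≤ (D - (s:ℝ)) * (D - (s:ℝ) - 1) / (D * (D - 1)) := by
    intro s hs
    rw [Finset.mem_Icc] at hs
    rcases Nat.lt_or_ge s d with h | h
    · have h' : (s:ℝ) + 1 ≤ D := by rw [hDdef]; exact_mod_cast h
      apply div_nonneg (mul_nonneg (by linarith) (by linarith)) (by positivity)
    · have hsd : s = d := le_antisymm hs.2 h
      subst hsd
      rw [← hDdef, sub_self, zero_mul, zero_div]
  -- alpha bounds
  have hα0u : alpha d ν 0 ≤ 1 := by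
    rw [e0]
    exact step _ 1 0 0 1 (fun s hs => by simpa using hψ1 s) (by field_simp; norm_num)
  have hα0l : 0 ≤ alpha d ν 0 := by
    rw [e0]
    exact step' _ 0 0 0 0 (fun s hs => by simpa using (hψ0 s).le) (by simp)
  have hα1l : 0 ≤ alpha d ν 1 := by
    rw [e1]
    refine step' _ 0 0 0 0 (fun s hs => ?_) (by simp)
    obtain ⟨h1, h2⟩ := memfacts s hs
    simpa using mul_nonneg (div_nonneg (by linarith) hD0.le) (hψ0 s).le
  have hα1u : alpha d ν 1 ≤ (D-1)/(2*D) := by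
    rw [e1]
    refine step _ 1 (-(1/D)) 0 _ (fun s hs => ?_) ?_
    · obtain ⟨h1, h2⟩ := memfacts s hs
      have hnn : 0 ≤ (D - (s:ℝ))/D := div_nonneg (by linarith) hD0.le
      calc (D - (s:ℝ))/D * psi ν ((s:ℝ)/D) ≤ (D - (s:ℝ))/D * 1 :=
            mul_le_mul_of_nonneg_left (hψ1 s) hnn
        _ = 1 + -(1/D)*(s:ℝ) + 0*(s:ℝ)^2 := by field_simp; ring
    · apply le_of_eq; field_simp; ring
  have hα2l : 0 ≤ alpha d ν 2 := by
    rw [e2]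
    refine step' _ 0 0 0 0 (fun s hs => ?_) (by simp)
    simpa using mul_nonneg (hw2nn s hs) (hψ0 s).le
  have hα21 : alpha d ν 2 ≤ alpha d ν 1 := by
    rw [e1, e2]
    refine mul_le_mul_of_nonneg_left (Finset.sum_le_sum fun s hs => ?_) (by positivity)
    obtain ⟨h1, h2⟩ := memfacts s hs
    refine mul_le_mul_of_nonneg_right ?_ (hψ0 s).le
    have hid : (D - (s:ℝ)) * (D - (s:ℝ) - 1) / (D * (D - 1))
        = ((D - (s:ℝ))/D) * ((D - (s:ℝ) - 1)/(D-1)) := by field_simp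
    rw [hid]
    have hr1 : (D - (s:ℝ) - 1)/(D-1) ≤ 1 := by
      rw [div_le_one hD1]; linarith
    calc ((D - (s:ℝ))/D) * ((D - (s:ℝ) - 1)/(D-1)) ≤ ((D - (s:ℝ))/D) * 1 :=
          mul_le_mul_of_nonneg_left hr1 (div_nonneg (by linarith) hD0.le)
      _ = (D - (s:ℝ))/D := mul_one _
  have h01u : alpha d ν 0 - alpha d ν 1 ≤ (D+1)/(2*D) := by
    rw [e0, e1, ← mul_sub, ← Finset.sum_sub_distrib]
    refine step _ 0 (1/D) 0 _ (fun s hs => ?_) ?_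
    · obtain ⟨h1, h2⟩ := memfacts s hs
      have hid : psi ν ((s:ℝ)/D) - (D - (s:ℝ))/D * psi ν ((s:ℝ)/D)
          = ((s:ℝ)/D) * psi ν ((s:ℝ)/D) := by field_simp; ring
      rw [hid]
      calc ((s:ℝ)/D) * psi ν ((s:ℝ)/D) ≤ ((s:ℝ)/D) * 1 :=
            mul_le_mul_of_nonneg_left (hψ1 s) (by positivity)
        _ = 0 + (1/D)*(s:ℝ) + 0*(s:ℝ)^2 := by field_simp; ring
    · apply le_of_eq; field_simp; ring
  have h01l : 0 ≤ alpha d ν 0 - alpha d ν 1 := by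
    rw [e0, e1, ← mul_sub, ← Finset.sum_sub_distrib]
    refine step' _ 0 0 0 0 (fun s hs => ?_) (by simp)
    obtain ⟨h1, h2⟩ := memfacts s hs
    have hid : psi ν ((s:ℝ)/D) - (D - (s:ℝ))/D * psi ν ((s:ℝ)/D)
        = ((s:ℝ)/D) * psi ν ((s:ℝ)/D) := by field_simp; ring
    rw [hid]
    simpa using mul_nonneg (by positivity : (0:ℝ) ≤ (s:ℝ)/D) (hψ0 s).le
  have h12 : m*(D+1)/(6*D) ≤ alpha d ν 1 - alpha d ν 2 := by
    rw [e1, e2, ← mul_sub, ← Finset.sum_sub_distrib]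
    refine step' _ 0 (m/(D-1)) (-(m/(D*(D-1)))) _ (fun s hs => ?_) ?_
    · obtain ⟨h1, h2⟩ := memfacts s hs
      have hid : (D - (s:ℝ))/D - (D - (s:ℝ)) * (D - (s:ℝ) - 1) / (D * (D - 1))
          = (s:ℝ)*(D - (s:ℝ))/(D*(D-1)) := by field_simp; ring
      have hnn : 0 ≤ (D - (s:ℝ))/D - (D - (s:ℝ)) * (D - (s:ℝ) - 1) / (D * (D - 1)) := by
        rw [hid]
        apply div_nonneg (mul_nonneg (by linarith) (by linarith)) (by positivity)
      calc 0 + (m/(D-1))*(s:ℝ) + (-(m/(D*(D-1))))*(s:ℝ)^2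
            = ((D - (s:ℝ))/D - (D - (s:ℝ)) * (D - (s:ℝ) - 1) / (D * (D - 1))) * m := by
              rw [hid]; field_simp; ring
        _ ≤ ((D - (s:ℝ))/D - (D - (s:ℝ)) * (D - (s:ℝ) - 1) / (D * (D - 1)))
              * psi ν ((s:ℝ)/D) := mul_le_mul_of_nonneg_left (hψm s) hnn
        _ = (D - (s:ℝ))/D * psi ν ((s:ℝ)/D)
              - (D - (s:ℝ)) * (D - (s:ℝ) - 1) / (D * (D - 1)) * psi ν ((s:ℝ)/D) := by ring
    · apply le_of_eq; field_simp; ring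
  -- sigma0 bounds
  have hσ0u : (D-1) * alpha d ν 2 + alpha d ν 1 ≤ D/3 := by
    have hcomb : (D-1) * alpha d ν 2 + alpha d ν 1
        = (1/D) * ∑ s ∈ Finset.Icc 1 d,
            ((D-1) * ((D - (s:ℝ)) * (D - (s:ℝ) - 1) / (D * (D - 1)) * psi ν ((s:ℝ)/D))
              + (D - (s:ℝ))/D * psi ν ((s:ℝ)/D)) := by
      rw [e1, e2, Finset.sum_add_distrib, ← Finset.mul_sum]; ring
    rw [hcomb]
    refine step _ D (-2) (1/D) _ (fun s hs => ?_) ?_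
    · obtain ⟨h1, h2⟩ := memfacts s hs
      have hid : (D-1) * ((D - (s:ℝ)) * (D - (s:ℝ) - 1) / (D * (D - 1)))
            + (D - (s:ℝ))/D = (D - (s:ℝ))^2/D := by field_simp; ring
      calc (D-1) * ((D - (s:ℝ)) * (D - (s:ℝ) - 1) / (D * (D - 1)) * psi ν ((s:ℝ)/D))
            + (D - (s:ℝ))/D * psi ν ((s:ℝ)/D)
          = ((D-1) * ((D - (s:ℝ)) * (D - (s:ℝ) - 1) / (D * (D - 1)))
            + (D - (s:ℝ))/D) * psi ν ((s:ℝ)/D) := by ring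
        _ = ((D - (s:ℝ))^2/D) * psi ν ((s:ℝ)/D) := by rw [hid]
        _ ≤ ((D - (s:ℝ))^2/D) * 1 := mul_le_mul_of_nonneg_left (hψ1 s) (by positivity)
        _ = D + (-2)*(s:ℝ) + (1/D)*(s:ℝ)^2 := by field_simp; ring
    · have heq : (1:ℝ)/D * (D*D + (-2)*(D*(D+1)/2) + (1/D)*(D*(D+1)*(2*D+1)/6))
          = (2*D^2 - 3*D + 1)/(6*D) := by field_simp; ring
      rw [heq, div_le_div_iff₀ (by positivity) (by norm_num : (0:ℝ) < 3)]
      nlinarith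
  have hσ0l : 0 ≤ (D-1) * alpha d ν 2 + alpha d ν 1 := by
    have := mul_nonneg hD1.le hα2l
    linarith
  -- key quantities
  set N : ℝ := (alpha d ν 1)^2 - alpha d ν 0 * alpha d ν 2 with hN
  set Dd : ℝ := alpha d ν 1 - alpha d ν 2 with hDd
  have hDdpos : 0 < Dd := lt_of_lt_of_le (by positivity) h12
  have hα1half : alpha d ν 1 ≤ 1/2 := by
    refine hα1u.trans ?_
    rw [div_le_div_iff₀ (by positivity) (by norm_num)]
    linarith
  have hNu : N ≤ (D+1)/(4*D) := by
    have h1 : (alpha d ν 1)^2 ≤ ((D-1)/(2*D))^2 := by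
      apply pow_le_pow_left₀ hα1l hα1u
    have h2 : ((D-1)/(2*D))^2 ≤ (D+1)/(4*D) := by
      rw [div_pow, div_le_div_iff₀ (by positivity) (by positivity)]
      nlinarith
    have h3 : 0 ≤ alpha d ν 0 * alpha d ν 2 := mul_nonneg hα0l hα2l
    rw [hN]; linarith
  have hNl : -((D+1)/(4*D)) ≤ N := by
    have h3 : alpha d ν 0 * alpha d ν 2 ≤ alpha d ν 0 * alpha d ν 1 :=
      mul_le_mul_of_nonneg_left hα21 hα0l
    have h4 : alpha d ν 0 * alpha d ν 1 - (alpha d ν 1)^2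
        = alpha d ν 1 * (alpha d ν 0 - alpha d ν 1) := by ring
    have h5 : alpha d ν 1 * (alpha d ν 0 - alpha d ν 1) ≤ (1/2) * ((D+1)/(2*D)) :=
      mul_le_mul hα1half h01u h01l (by norm_num)
    have h6 : (1/2) * ((D+1)/(2*D)) = (D+1)/(4*D) := by ring
    rw [hN]; linarith
  have hNabs : |N| ≤ (D+1)/(4*D) := abs_le.mpr ⟨hNl, hNu⟩
  -- sigma3 bound
  have hEm : (3/2) * E * (m*(D+1)/(6*D)) = (D+1)/(4*D) := by
    rw [show (3:ℝ)/2 * E * (m*(D+1)/(6*D)) = (m*E) * ((D+1)/(4*D)) by ring, hmE, one_mul]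
  have hσ3 : |sigma3 d ν| ≤ (3/2) * E := by
    have : sigma3 d ν = N / Dd := by simp only [sigma3, hN, hDd]
    rw [this, abs_div, abs_of_pos hDdpos, div_le_iff₀ hDdpos]
    calc |N| ≤ (D+1)/(4*D) := hNabs
      _ = (3/2) * E * (m*(D+1)/(6*D)) := hEm.symm
      _ ≤ (3/2) * E * Dd := by
          apply mul_le_mul_of_nonneg_left h12 (by positivity)
  -- sigma2 via identity
  have hσ2id : sigma2 d ν = alpha d ν 0 - (D-1) * sigma3 d ν := by
    have hxe : alpha d ν 1 - alpha d ν 2 ≠ 0 := by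
      rw [← hDd]; exact ne_of_gt hDdpos
    simp only [sigma2, sigma3, ← hDdef]
    field_simp
    ring
  have hσ2 : |sigma2 d ν| ≤ (3*D/2) * E := by
    rw [hσ2id]
    calc |alpha d ν 0 - (D-1) * sigma3 d ν|
        = |alpha d ν 0 + -((D-1) * sigma3 d ν)| := by rw [sub_eq_add_neg]
      _ ≤ |alpha d ν 0| + |-((D-1) * sigma3 d ν)| := abs_add_le _ _
      _ = |alpha d ν 0| + |(D-1) * sigma3 d ν| := by rw [abs_neg]
      _ = alpha d ν 0 + (D-1) * |sigma3 d ν| := by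
          rw [abs_of_nonneg hα0l, abs_mul, abs_of_nonneg hD1.le]
      _ ≤ 1 + (D-1) * ((3/2)*E) := by
          have := mul_le_mul_of_nonneg_left hσ3 hD1.le
          linarith
      _ ≤ (3*D/2) * E := by nlinarith
  refine ⟨?_, ?_, hσ2, hσ3⟩
  · simp only [sigma0, ← hDdef]
    exact abs_le.mpr ⟨by linarith, hσ0u⟩
  · simp only [sigma1]
    rw [abs_neg, abs_of_nonneg hα1l]
    linarith
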